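/- Let C₁, C₂ be nonempty closed convex subsets of a real Hilbert space H with projections P₁, P₂, let x₀ ∈ H, and define x_{2n+1} = P₁ x_{2n}, x_{2n+2} = P₂ x_{2n+1}. Then lim_{n→∞} |x_{2n+2} - x_{2n+1}| = lim_{n→∞} |x_{2n+1} - x_{2n}| = d(C₁, C₂), where d(C₁,C₂) = inf{|x - y| : x ∈ C₁, y ∈ C₂}. -/

import Mathlib

open Filter Topology

/-- `P` is the nearest point projection of a real Hilbert space onto `C`. -/
def IsNearestPointProj {H : Type*} [NormedAddCommGroup H] [InnerProductSpace ℝ H]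
    (C : Set H) (P : H → H) : Prop :=
  ∀ x, P x ∈ C ∧ ∀ y ∈ C, ‖x - P x‖ ≤ ‖x - y‖

/-- The distance between two sets. -/
noncomputable def setDist {H : Type*} [NormedAddCommGroup H] (C₁ C₂ : Set H) : ℝ :=
  sInf {d : ℝ | ∃ a ∈ C₁, ∃ b ∈ C₂, d = ‖a - b‖}

lemma proj_inner_le {H : Type*} [NormedAddCommGroup H] [InnerProductSpace ℝ H]
    {C : Set H} {P : H → H} (hC : Convex ℝ C) (hP : IsNearestPointProj C P)
    (x : H) {y : H} (hy : y ∈ C) : inner ℝ (x - P x) (y - P x) ≤ (0:ℝ) := by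
  set v := P x with hv
  set z := y - v with hz
  rcases eq_or_ne z 0 with h0 | h0
  · rw [h0, inner_zero_right]
  have key : ∀ t : ℝ, 0 < t → t ≤ 1 → 2 * t * (inner ℝ (x - v) z : ℝ) ≤ t ^ 2 * ‖z‖ ^ 2 := by
    intro t ht0 ht1
    have hmem : v + t • z ∈ C := by
      have := hC (hP x).1 hy (by linarith : (0:ℝ) ≤ 1 - t) (le_of_lt ht0) (by ring)
      convert this using 1
      rw [hz]
      module
    have hle : ‖x - v‖ ≤ ‖x - (v + t • z)‖ := (hP x).2 _ hmem
    have hsq : ‖x - v‖ ^ 2 ≤ ‖x - (v + t • z)‖ ^ 2 := by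
      have := norm_nonneg (x - v); nlinarith
    have hexp : ‖x - (v + t • z)‖ ^ 2
        = ‖x - v‖ ^ 2 - 2 * t * (inner ℝ (x - v) z : ℝ) + t ^ 2 * ‖z‖ ^ 2 := by
      have h1 : x - (v + t • z) = (x - v) - t • z := by abel
      rw [h1, @norm_sub_sq_real, real_inner_smul_right, norm_smul]
      simp [Real.norm_eq_abs, abs_of_pos ht0]
      ring
    nlinarith [hsq, hexp]
  by_contra hc
  push_neg at hc
  set I : ℝ := inner ℝ (x - v) z with hI
  have hznorm : 0 < ‖z‖ ^ 2 := pow_pos (norm_pos_iff.mpr h0) 2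
  set t := min 1 (I / ‖z‖ ^ 2) with ht
  have ht0 : 0 < t := lt_min one_pos (div_pos hc hznorm)
  have ht1 : t ≤ 1 := min_le_left _ _
  have h2 : t * ‖z‖ ^ 2 ≤ I := by
    have : t ≤ I / ‖z‖ ^ 2 := min_le_right _ _
    calc t * ‖z‖ ^ 2 ≤ (I / ‖z‖ ^ 2) * ‖z‖ ^ 2 := by nlinarith
    _ = I := by field_simp
  have := key t ht0 ht1
  nlinarith

lemma proj_firm {H : Type*} [NormedAddCommGroup H] [InnerProductSpace ℝ H]
    {C : Set H} {P : H → H} (hC : Convex ℝ C) (hP : IsNearestPointProj C P)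
    (x y : H) :
    ‖P x - P y‖ ^ 2 + ‖(x - P x) - (y - P y)‖ ^ 2 ≤ ‖x - y‖ ^ 2 := by
  have h1 := proj_inner_le hC hP x (hP y).1
  have h2 := proj_inner_le hC hP y (hP x).1
  have hdec : x - y = (P x - P y) + ((x - P x) - (y - P y)) := by abel
  have hexp : ‖x - y‖ ^ 2 = ‖P x - P y‖ ^ 2 + ‖(x - P x) - (y - P y)‖ ^ 2
      + 2 * (inner ℝ (P x - P y) ((x - P x) - (y - P y)) : ℝ) := by
    rw [hdec, @norm_add_sq_real]; ring
  have hcross : (0:ℝ) ≤ inner ℝ (P x - P y) ((x - P x) - (y - P y)) := by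
    have e1 : (inner ℝ (x - P x) (P y - P x) : ℝ) = - inner ℝ (P x - P y) (x - P x) := by
      rw [show P y - P x = -(P x - P y) by abel, inner_neg_right, real_inner_comm]
    have e2 : (inner ℝ (y - P y) (P x - P y) : ℝ) = inner ℝ (P x - P y) (y - P y) := by
      rw [real_inner_comm]
    have e3 : (inner ℝ (P x - P y) ((x - P x) - (y - P y)) : ℝ)
        = inner ℝ (P x - P y) (x - P x) - inner ℝ (P x - P y) (y - P y) := by
      rw [inner_sub_right]
    rw [e1] at h1; rw [e2] at h2
    linarith [e3.ge, e3.le]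
  linarith [hexp]

theorem stmt6 {H : Type*} [NormedAddCommGroup H] [InnerProductSpace ℝ H] [CompleteSpace H]
    (C₁ C₂ : Set H) (h₁ : C₁.Nonempty) (h₁c : IsClosed C₁) (h₁v : Convex ℝ C₁)
    (h₂ : C₂.Nonempty) (h₂c : IsClosed C₂) (h₂v : Convex ℝ C₂)
    (P₁ P₂ : H → H) (hP₁ : IsNearestPointProj C₁ P₁) (hP₂ : IsNearestPointProj C₂ P₂)
    (x₀ : H) (x : ℕ → H) (hx0 : x 0 = x₀)
    (hodd : ∀ n : ℕ, x (2 * n + 1) = P₁ (x (2 * n)))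
    (heven : ∀ n : ℕ, x (2 * n + 2) = P₂ (x (2 * n + 1))) :
    Tendsto (fun n => ‖x (2 * n + 2) - x (2 * n + 1)‖) atTop (𝓝 (setDist C₁ C₂)) ∧
    Tendsto (fun n => ‖x (2 * n + 1) - x (2 * n)‖) atTop (𝓝 (setDist C₁ C₂)) := by
  classical
  set S : Set ℝ := {d : ℝ | ∃ a ∈ C₁, ∃ b ∈ C₂, d = ‖a - b‖} with hS
  obtain ⟨a₀, ha₀⟩ := h₁
  obtain ⟨b₀, hb₀⟩ := h₂
  have hSne : S.Nonempty := ⟨‖a₀ - b₀‖, a₀, ha₀, b₀, hb₀, rfl⟩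
  have hSbdd : BddBelow S := ⟨0, by rintro z ⟨p, hp, q, hq, rfl⟩; positivity⟩
  set d : ℝ := setDist C₁ C₂ with hd
  have hdS : d = sInf S := rfl
  have hd_le : ∀ p ∈ C₁, ∀ q ∈ C₂, d ≤ ‖p - q‖ := by
    intro p hp q hq
    exact csInf_le hSbdd ⟨p, hp, q, hq, rfl⟩
  -- uniform step maps
  set Q : ℕ → H → H := fun n => if Even n then P₁ else P₂ with hQdef
  set Cs : ℕ → Set H := fun n => if Even n then C₁ else C₂ with hCsdef
  have hQ : ∀ n, IsNearestPointProj (Cs n) (Q n) := by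
    intro n
    simp only [hQdef, hCsdef]
    split
    · exact hP₁
    · exact hP₂
  have hCv : ∀ n, Convex ℝ (Cs n) := by
    intro n
    simp only [hCsdef]
    split
    · exact h₁v
    · exact h₂v
  have hCs2 : ∀ n, Cs (n + 2) = Cs n := by
    intro n
    have : Even (n + 2) ↔ Even n := by
      constructor
      · rintro ⟨r, hr⟩; exact ⟨r - 1, by omega⟩
      · rintro ⟨r, hr⟩; exact ⟨r + 1, by omega⟩
    simp only [hCsdef, this]
  have hxrec : ∀ n, x (n + 1) = Q n (x n) := by
    intro n
    rcases Nat.even_or_odd n with ⟨m, hm⟩ | ⟨m, hm⟩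
    · subst hm
      have h := hodd m
      rw [two_mul] at h
      rw [h]
      simp only [hQdef]
      rw [if_pos ⟨m, rfl⟩]
    · subst hm
      have h := heven m
      have hne : ¬ Even (2 * m + 1) := by rintro ⟨r, hr⟩; omega
      show x (2 * m + 1 + 1) = Q (2 * m + 1) (x (2 * m + 1))
      rw [show 2 * m + 1 + 1 = 2 * m + 2 from rfl, h]
      simp only [hQdef]
      rw [if_neg hne]
  have hxmem : ∀ n, x (n + 1) ∈ Cs n := by
    intro n
    rw [hxrec n]
    exact (hQ n (x n)).1
  have hlow : ∀ k : ℕ, d ≤ ‖x (k + 1) - x (k + 2)‖ := by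
    intro k
    have h1 : x (k + 1) ∈ Cs k := hxmem k
    have h2 : x (k + 2) ∈ Cs (k + 1) := hxmem (k + 1)
    by_cases he : Even k
    · have hne : ¬ Even (k + 1) := by rintro ⟨r, hr⟩; obtain ⟨s, hs⟩ := he; omega
      simp only [hCsdef] at h1 h2
      rw [if_pos he] at h1
      rw [if_neg hne] at h2
      exact hd_le _ h1 _ h2
    · have hev : Even (k + 1) := by
        rcases Nat.even_or_odd (k + 1) with h | ⟨r, hr⟩
        · exact h
        · exact absurd ⟨r, by omega⟩ he
      simp only [hCsdef] at h1 h2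
      rw [if_neg he] at h1
      rw [if_pos hev] at h2
      rw [norm_sub_rev]
      exact hd_le _ h2 _ h1
  -- main convergence of consecutive differences
  have hmain : Tendsto (fun n => ‖x n - x (n + 1)‖) atTop (𝓝 d) := by
    rw [Metric.tendsto_atTop]
    intro ε hε
    -- pick a near-optimal pair
    obtain ⟨c, hcS, hc⟩ := exists_lt_of_csInf_lt hSne (by rw [← hdS]; linarith : sInf S < d + ε / 2)
    obtain ⟨a, ha, b, hb, rfl⟩ := hcS
    -- companion orbit starting at b
    set y : ℕ → H := fun n => Nat.rec b (fun k yk => Q k yk) n with hy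
    have hyrec : ∀ n, y (n + 1) = Q n (y n) := fun n => rfl
    have hymem : ∀ n, y n ∈ Cs (n + 1) := by
      intro n
      induction n with
      | zero =>
        have hne : ¬ Even 1 := by rintro ⟨r, hr⟩; omega
        show b ∈ Cs 1
        simp only [hCsdef]
        rw [if_neg hne]
        exact hb
      | succ n ih =>
        rw [hCs2 n, hyrec n]
        exact (hQ n (y n)).1
    have hw : ∀ n, ‖y n - y (n + 1)‖ ≤ ‖a - b‖ := by
      intro n
      induction n with
      | zero =>
        have h0 : Q 0 = P₁ := by rw [hQdef]; simp
        rw [hyrec 0, h0]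
        calc ‖y 0 - P₁ (y 0)‖ ≤ ‖y 0 - a‖ := (hP₁ (y 0)).2 a ha
        _ = ‖a - b‖ := by show ‖b - a‖ = ‖a - b‖; rw [norm_sub_rev]
      | succ n ih =>
        calc ‖y (n + 1) - y (n + 2)‖
            = ‖y (n + 1) - Q (n + 1) (y (n + 1))‖ := by rw [hyrec (n + 1)]
        _ ≤ ‖y (n + 1) - y n‖ := (hQ (n + 1) (y (n + 1))).2 (y n) (hymem n)
        _ = ‖y n - y (n + 1)‖ := norm_sub_rev _ _
        _ ≤ ‖a - b‖ := ih
    set s : ℕ → ℝ := fun n => ‖x n - y n‖ ^ 2 with hsdef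
    have sfirm : ∀ n, s (n + 1) + ‖(x n - x (n + 1)) - (y n - y (n + 1))‖ ^ 2 ≤ s n := by
      intro n
      have := proj_firm (hCv n) (hQ n) (x n) (y n)
      simp only [hsdef]
      rw [hxrec n, hyrec n]
      exact this
    have hanti : Antitone s := antitone_nat_of_succ_le (by
      intro n
      have h := sfirm n
      nlinarith [sq_nonneg ‖(x n - x (n + 1)) - (y n - y (n + 1))‖])
    have hsbdd : BddBelow (Set.range s) := ⟨0, by rintro _ ⟨n, rfl⟩; positivity⟩
    have hslim : Tendsto s atTop (𝓝 (⨅ n, s n)) := tendsto_atTop_ciInf hanti hsbdd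
    have hdiffs : Tendsto (fun n => s n - s (n + 1)) atTop (𝓝 0) := by
      have := hslim.sub (hslim.comp (tendsto_add_atTop_nat 1))
      simpa using this
    have hsq : Tendsto (fun n => ‖(x n - x (n + 1)) - (y n - y (n + 1))‖ ^ 2) atTop (𝓝 0) :=
      squeeze_zero (fun n => by positivity) (fun n => by linarith [sfirm n]) hdiffs
    have hnorm0 : Tendsto (fun n => ‖(x n - x (n + 1)) - (y n - y (n + 1))‖) atTop (𝓝 0) := by
      have h := hsq.sqrt
      rw [Real.sqrt_zero] at h
      refine h.congr fun n => ?_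
      exact Real.sqrt_sq (norm_nonneg _)
    rw [Metric.tendsto_atTop] at hnorm0
    obtain ⟨N, hN⟩ := hnorm0 (ε / 2) (by linarith)
    refine ⟨N + 1, fun n hn => ?_⟩
    obtain ⟨k, rfl⟩ : ∃ k, n = k + 1 := ⟨n - 1, by omega⟩
    have hlow' : d ≤ ‖x (k + 1) - x (k + 2)‖ := hlow k
    have hsmall : ‖(x (k + 1) - x (k + 2)) - (y (k + 1) - y (k + 2))‖ < ε / 2 := by
      have := hN (k + 1) (by omega)
      rwa [Real.dist_eq, sub_zero, abs_of_nonneg (norm_nonneg _)] at this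
    have hup : ‖x (k + 1) - x (k + 2)‖ < d + ε := by
      have htri : ‖x (k + 1) - x (k + 2)‖
          ≤ ‖y (k + 1) - y (k + 2)‖ + ‖(x (k + 1) - x (k + 2)) - (y (k + 1) - y (k + 2))‖ := by
        have heq : x (k + 1) - x (k + 2)
            = (y (k + 1) - y (k + 2)) + ((x (k + 1) - x (k + 2)) - (y (k + 1) - y (k + 2))) := by
          abel
        calc ‖x (k + 1) - x (k + 2)‖
            = ‖(y (k + 1) - y (k + 2)) + ((x (k + 1) - x (k + 2)) - (y (k + 1) - y (k + 2)))‖ := by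
              rw [← heq]
        _ ≤ _ := norm_add_le _ _
      have := hw (k + 1)
      linarith
    rw [Real.dist_eq, abs_lt]
    constructor <;> [linarith; linarith]
  -- conclude both subsequence limits
  have h1 : Tendsto (fun n : ℕ => 2 * n + 1) atTop atTop :=
    tendsto_atTop_mono (fun n => by show n ≤ 2 * n + 1; omega) tendsto_id
  have h2 : Tendsto (fun n : ℕ => 2 * n) atTop atTop :=
    tendsto_atTop_mono (fun n => by show n ≤ 2 * n; omega) tendsto_id
  constructor
  · have := hmain.comp h1
    refine this.congr fun n => ?_
    show ‖x (2 * n + 1) - x (2 * n + 1 + 1)‖ = ‖x (2 * n + 2) - x (2 * n + 1)‖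
    rw [show 2 * n + 1 + 1 = 2 * n + 2 from rfl, norm_sub_rev]
  · have := hmain.comp h2
    refine this.congr fun n => ?_
    show ‖x (2 * n) - x (2 * n + 1)‖ = ‖x (2 * n + 1) - x (2 * n)‖
    rw [norm_sub_rev]
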